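/- Let M = [[A, G], [-D, 0]] with A and S = -D A^{-1} G invertible, and let P2 be the lower block-triangular matrix [[A, 0], [-D, -S]]. Then P2^{-1} M equals the block upper triangular matrix [[I, A^{-1} G], [0, I]], and consequently (P2^{-1} M - I)^2 has lower-left block -S^{-1} D (A^{-1} G)·0 = 0; in fact (P2^{-1}M - I)^2 = 0. -/
import Mathlib


open Matrix

theorem stmt_2 {n m : ℕ}
    (A : Matrix (Fin n) (Fin n) ℝ) (G : Matrix (Fin n) (Fin m) ℝ)
    (D : Matrix (Fin m) (Fin n) ℝ)
    (S : Matrix (Fin m) (Fin m) ℝ) (hSdef : S = -(D * A⁻¹ * G))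
    (hA : IsUnit A.det) (hS : IsUnit S.det)
    (M P2 : Matrix (Fin n ⊕ Fin m) (Fin n ⊕ Fin m) ℝ)
    (hM : M = Matrix.fromBlocks A G (-D) (0 : Matrix (Fin m) (Fin m) ℝ))
    (hP2 : P2 = Matrix.fromBlocks A (0 : Matrix (Fin n) (Fin m) ℝ) (-D) (-S)) :
    P2⁻¹ * M = Matrix.fromBlocks (1 : Matrix (Fin n) (Fin n) ℝ) (A⁻¹ * G)
        (0 : Matrix (Fin m) (Fin n) ℝ) (1 : Matrix (Fin m) (Fin m) ℝ) ∧
      (P2⁻¹ * M - 1) ^ 2 = 0 := by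
  set U : Matrix (Fin n ⊕ Fin m) (Fin n ⊕ Fin m) ℝ :=
    Matrix.fromBlocks 1 (A⁻¹ * G) 0 1 with hU
  have hP2det : IsUnit P2.det := by
    rw [hP2, Matrix.det_fromBlocks_zero₁₂, Matrix.det_neg]
    exact hA.mul ((isUnit_one.neg.pow _).mul hS)
  have hPU : P2 * U = M := by
    rw [hP2, hU, hM, Matrix.fromBlocks_multiply]
    have e1 : A * (A⁻¹ * G) = G := by
      rw [← Matrix.mul_assoc, Matrix.mul_nonsing_inv A hA, Matrix.one_mul]
    have e2 : -(D * (A⁻¹ * G)) + -S = 0 := by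
      rw [hSdef]; simp [Matrix.mul_assoc]
    simp [e1, e2]
  have h1 : P2⁻¹ * M = U := by
    rw [← hPU, ← Matrix.mul_assoc, Matrix.nonsing_inv_mul P2 hP2det, Matrix.one_mul]
  refine ⟨h1, ?_⟩
  rw [h1, sq]
  have : U - 1 = Matrix.fromBlocks 0 (A⁻¹ * G) 0 0 := by
    rw [hU, ← Matrix.fromBlocks_one, sub_eq_add_neg, Matrix.fromBlocks_neg,
      Matrix.fromBlocks_add]
    simp
  rw [this, Matrix.fromBlocks_multiply]
  simp
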